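/- MWER satisfies Ambiguity Aversion: for any menu M, acts f, g ∈ M with equal maximum weighted expected regret (f ∼_{M,P⁺} g), and p ∈ (0,1), the mixture pf + (1-p)g satisfies regret_{M∪{pf+(1-p)g}, P⁺}(pf+(1-p)g) ≤ regret_{M∪{pf+(1-p)g}, P⁺}(g), i.e., pf+(1-p)g ⪰ g with respect to the enlarged menu. -/

import Mathlib

open Finset

def IsProb {S : Type*} [Fintype S] (p : S → ℝ) : Prop :=
  (∀ s, 0 ≤ p s) ∧ ∑ s, p s = 1

noncomputable def best {S : Type*} [Fintype S] (M : Set (S → ℝ)) (s : S) : ℝ :=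
  sSup ((fun g => g s) '' M)

noncomputable def wreg {S : Type*} [Fintype S]
    (P : Set ((S → ℝ) × ℝ)) (M : Set (S → ℝ)) (f : S → ℝ) : ℝ :=
  sSup {r | ∃ pa ∈ P, r = pa.2 * ∑ s, pa.1 s * (best M s - f s)}

/-- MWER satisfies Ambiguity Aversion: if `f ∼_{M,P⁺} g` then the mixture
`pf + (1-p)g` is weakly preferred to `g` with respect to the enlarged menu
`M ∪ {pf + (1-p)g}`. -/
theorem mwer_ambiguity_aversion
    {S : Type*} [Fintype S]
    (P : Set ((S → ℝ) × ℝ))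
    (hP : ∀ pa ∈ P, IsProb pa.1 ∧ pa.2 ∈ Set.Icc (0:ℝ) 1)
    (M : Set (S → ℝ))
    (hbdd : ∀ s, BddAbove ((fun g => g s) '' M))
    (f g : S → ℝ) (hf : f ∈ M) (hg : g ∈ M)
    (heq : wreg P M f = wreg P M g)
    (p : ℝ) (hp : p ∈ Set.Ioo (0:ℝ) 1) :
    wreg P (M ∪ {p • f + (1-p) • g}) (p • f + (1-p) • g) ≤
      wreg P (M ∪ {p • f + (1-p) • g}) g := by
  set m : S → ℝ := p • f + (1-p) • g with hm
  obtain ⟨hp0, hp1⟩ := hp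
  have hfle : ∀ s, f s ≤ best M s := fun s => le_csSup (hbdd s) ⟨f, hf, rfl⟩
  have hgle : ∀ s, g s ≤ best M s := fun s => le_csSup (hbdd s) ⟨g, hg, rfl⟩
  have hmle : ∀ s, m s ≤ best M s := by
    intro s
    have : m s = p * f s + (1-p) * g s := by simp [hm]
    rw [this]
    nlinarith [hfle s, hgle s]
  have hbest : ∀ s, best (M ∪ {m}) s = best M s := by
    intro s
    unfold best
    have hne : ((fun g => g s) '' (M ∪ {m})).Nonempty := ⟨f s, ⟨f, Or.inl hf, rfl⟩⟩
    have hne2 : ((fun g => g s) '' M).Nonempty := ⟨f s, ⟨f, hf, rfl⟩⟩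
    have hbdd2 : BddAbove ((fun g => g s) '' (M ∪ {m})) := by
      rw [Set.image_union, Set.image_singleton]
      exact (hbdd s).union (bddAbove_singleton)
    apply le_antisymm
    · apply csSup_le hne
      rintro x ⟨h, hh, rfl⟩
      rcases hh with hh | hh
      · exact le_csSup (hbdd s) ⟨h, hh, rfl⟩
      · rw [Set.mem_singleton_iff] at hh; subst hh; exact hmle s
    · exact csSup_le_csSup hbdd2 hne2 (Set.image_mono Set.subset_union_left)
  have hwbdd : ∀ h : S → ℝ, h ∈ M →
      BddAbove {r | ∃ pa ∈ P, r = pa.2 * ∑ s, pa.1 s * (best M s - h s)} := by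
    intro h hh
    refine ⟨∑ s, (best M s - h s), ?_⟩
    rintro r ⟨pa, hpa, rfl⟩
    obtain ⟨⟨hpos, hsum⟩, ha0, ha1⟩ := hP pa hpa
    have hle1 : ∀ s, pa.1 s ≤ 1 := by
      intro s
      calc pa.1 s ≤ ∑ t, pa.1 t :=
            Finset.single_le_sum (fun t _ => hpos t) (Finset.mem_univ s)
        _ = 1 := hsum
    have hhle : ∀ s, h s ≤ best M s := fun s => le_csSup (hbdd s) ⟨h, hh, rfl⟩
    have h1 : ∑ s, pa.1 s * (best M s - h s) ≤ ∑ s, (best M s - h s) :=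
      Finset.sum_le_sum fun s _ =>
        mul_le_of_le_one_left (by linarith [hhle s]) (hle1 s)
    have h0 : 0 ≤ ∑ s, pa.1 s * (best M s - h s) :=
      Finset.sum_nonneg fun s _ => mul_nonneg (hpos s) (by linarith [hhle s])
    calc pa.2 * ∑ s, pa.1 s * (best M s - h s)
        ≤ ∑ s, pa.1 s * (best M s - h s) := mul_le_of_le_one_left h0 ha1
      _ ≤ ∑ s, (best M s - h s) := h1
  have hnonneg : 0 ≤ wreg P M g := by
    rcases Set.eq_empty_or_nonempty P with hPe | ⟨pa, hpa⟩
    · have : {r | ∃ pa ∈ P, r = pa.2 * ∑ s, pa.1 s * (best M s - g s)} = ∅ := by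
        simp [hPe]
      unfold wreg; rw [this, Real.sSup_empty]
    · obtain ⟨⟨hpos, hsum⟩, ha0, ha1⟩ := hP pa hpa
      have he : 0 ≤ pa.2 * ∑ s, pa.1 s * (best M s - g s) :=
        mul_nonneg ha0 (Finset.sum_nonneg fun s _ =>
          mul_nonneg (hpos s) (by linarith [hgle s]))
      exact le_trans he (le_csSup (hwbdd g hg) ⟨pa, hpa, rfl⟩)
  have hrg : wreg P (M ∪ {m}) g = wreg P M g := by
    unfold wreg
    congr 1
    ext r
    simp only [hbest]
  rw [hrg]
  unfold wreg
  apply Real.sSup_le _ hnonneg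
  rintro r ⟨pa, hpa, rfl⟩
  have key : pa.2 * ∑ s, pa.1 s * (best (M ∪ {m}) s - m s) =
      p * (pa.2 * ∑ s, pa.1 s * (best M s - f s)) +
      (1-p) * (pa.2 * ∑ s, pa.1 s * (best M s - g s)) := by
    have hterm : ∀ s ∈ Finset.univ, pa.1 s * (best (M ∪ {m}) s - m s) =
        p * (pa.1 s * (best M s - f s)) + (1-p) * (pa.1 s * (best M s - g s)) := by
      intro s _
      rw [hbest s]
      have : m s = p * f s + (1-p) * g s := by simp [hm]
      rw [this]; ring
    rw [Finset.sum_congr rfl hterm, Finset.sum_add_distrib,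
      ← Finset.mul_sum, ← Finset.mul_sum]
    ring
  rw [key]
  have h1 : pa.2 * ∑ s, pa.1 s * (best M s - f s) ≤ wreg P M f :=
    le_csSup (hwbdd f hf) ⟨pa, hpa, rfl⟩
  have h2 : pa.2 * ∑ s, pa.1 s * (best M s - g s) ≤ wreg P M g :=
    le_csSup (hwbdd g hg) ⟨pa, hpa, rfl⟩
  have : p * (pa.2 * ∑ s, pa.1 s * (best M s - f s)) +
      (1-p) * (pa.2 * ∑ s, pa.1 s * (best M s - g s)) ≤
      p * wreg P M f + (1-p) * wreg P M g := by
    apply add_le_add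
    · exact mul_le_mul_of_nonneg_left h1 (le_of_lt hp0)
    · exact mul_le_mul_of_nonneg_left h2 (by linarith)
  rw [heq] at this
  linarith
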